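/- arXiv:1301.0761 — 2 statements merged into one kernel-verified Lean document; each statement's English description precedes it below -/
import Mathlib

section
/- A pseudo-multiplication ⊙ is non-degenerate if and only if the restriction of ⊙ to [0, 1_⊙] is commutative (i.e., s ⊙ t = t ⊙ s for all s, t ∈ [0, 1_⊙]). -/
open Set Filter Topology
open scoped ENNReal

/-- A pseudo-multiplication on `[0,∞]`. -/
structure PseudoMul where
  mul : ℝ≥0∞ → ℝ≥0∞ → ℝ≥0∞
  assoc : ∀ a b c, mul (mul a b) c = mul a (mul b c)
  continuousOn : ContinuousOn (fun p : ℝ≥0∞ × ℝ≥0∞ => mul p.1 p.2) (Ioo 0 ⊤ ×ˢ univ)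
  continuousOn_left : ∀ t, ContinuousOn (fun s => mul s t) (Ioi 0)
  mono : ∀ ⦃a b : ℝ≥0∞⦄, a ≤ b → ∀ ⦃c d : ℝ≥0∞⦄, c ≤ d → mul a c ≤ mul b d
  one : ℝ≥0∞
  one_mul : ∀ t, mul one t = t
  eq_zero_of_mul : ∀ s t, mul s t = 0 → s = 0 ∨ t = 0
  zero_mul : ∀ t, mul 0 t = 0
  mul_zero : ∀ t, mul t 0 = 0

/-- The kernel `O(t) = ⨅_{s>0} s ⊙ t`. -/
noncomputable def PseudoMul.O (P : PseudoMul) (t : ℝ≥0∞) : ℝ≥0∞ :=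
  ⨅ s ∈ Ioi (0 : ℝ≥0∞), P.mul s t

namespace PseudoMul

variable (P : PseudoMul)

lemma one_pos : 0 < P.one := by
  rcases eq_or_ne P.one 0 with h | h
  · have h1 : (1 : ℝ≥0∞) = 0 := by
      have := P.one_mul 1
      rw [h, P.zero_mul] at this
      exact this.symm
    simp at h1
  · exact zero_lt_iff.mpr h

lemma contAt_joint {p q : ℝ≥0∞} (hp0 : p ≠ 0) (hpT : p ≠ ⊤) :
    ContinuousAt (fun z : ℝ≥0∞ × ℝ≥0∞ => P.mul z.1 z.2) (p, q) :=
  P.continuousOn.continuousAt ((isOpen_Ioo.prod isOpen_univ).mem_nhds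
    ⟨⟨zero_lt_iff.mpr hp0, lt_top_iff_ne_top.mpr hpT⟩, mem_univ _⟩)

lemma contL {s : ℝ≥0∞} (hs0 : s ≠ 0) (hsT : s ≠ ⊤) : Continuous (fun t => P.mul s t) := by
  rw [continuous_iff_continuousAt]
  intro t
  exact (P.contAt_joint hs0 hsT).comp ((continuous_const.prodMk continuous_id).continuousAt)

lemma contRAt {t s : ℝ≥0∞} (hs : s ≠ 0) : ContinuousAt (fun s => P.mul s t) s :=
  (P.continuousOn_left t).continuousAt (isOpen_Ioi.mem_nhds (zero_lt_iff.mpr hs))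

/-! ### Powers -/

end PseudoMul

def PseudoMul.pw (P : PseudoMul) (c : ℝ≥0∞) : ℕ → ℝ≥0∞
  | 0 => c
  | n + 1 => P.mul c (P.pw c n)

namespace PseudoMul

variable {P : PseudoMul}

lemma pw_zero (c : ℝ≥0∞) : P.pw c 0 = c := rfl

lemma pw_succ (c : ℝ≥0∞) (n : ℕ) : P.pw c (n + 1) = P.mul c (P.pw c n) := rfl

lemma pw_le_one {c : ℝ≥0∞} (hc : c ≤ P.one) : ∀ n, P.pw c n ≤ P.one := by
  intro n
  induction n with
  | zero => exact hc
  | succ n ih =>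
    calc P.pw c (n + 1) = P.mul c (P.pw c n) := pw_succ c n
    _ ≤ P.mul P.one P.one := P.mono hc ih
    _ = P.one := P.one_mul _

lemma pw_succ_le {c : ℝ≥0∞} (hc : c ≤ P.one) (n : ℕ) : P.pw c (n + 1) ≤ P.pw c n := by
  calc P.pw c (n + 1) = P.mul c (P.pw c n) := pw_succ c n
  _ ≤ P.mul P.one (P.pw c n) := P.mono hc le_rfl
  _ = P.pw c n := P.one_mul _

lemma pw_antitone {c : ℝ≥0∞} (hc : c ≤ P.one) : Antitone (P.pw c) :=
  antitone_nat_of_succ_le (pw_succ_le hc)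

lemma pw_add {c : ℝ≥0∞} (j k : ℕ) :
    P.mul (P.pw c j) (P.pw c k) = P.pw c (j + k + 1) := by
  induction j with
  | zero =>
    rw [pw_zero, Nat.zero_add, pw_succ]
  | succ j ih =>
    calc P.mul (P.pw c (j + 1)) (P.pw c k) = P.mul (P.mul c (P.pw c j)) (P.pw c k) := by
          rw [pw_succ]
    _ = P.mul c (P.mul (P.pw c j) (P.pw c k)) := P.assoc _ _ _
    _ = P.mul c (P.pw c (j + k + 1)) := by rw [ih]
    _ = P.pw c (j + k + 2) := (pw_succ c _).symm
    _ = P.pw c (j + 1 + k + 1) := by ring_nf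

lemma pw_sqrt {c d : ℝ≥0∞} (hd : P.mul d d = c) : ∀ k, P.pw d (2 * k + 1) = P.pw c k := by
  intro k
  induction k with
  | zero =>
    show P.pw d (0 + 1) = P.pw c 0
    rw [pw_succ, pw_zero, pw_zero, hd]
  | succ k ih =>
    have h1 : 2 * (k + 1) + 1 = (2 * k + 1) + 1 + 1 := by ring
    rw [h1]
    calc P.pw d (2 * k + 1 + 1 + 1) = P.mul d (P.mul d (P.pw d (2 * k + 1))) := by
          rw [pw_succ, pw_succ]
    _ = P.mul (P.mul d d) (P.pw d (2 * k + 1)) := (P.assoc _ _ _).symm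
    _ = P.mul c (P.pw c k) := by rw [hd, ih]
    _ = P.pw c (k + 1) := (pw_succ c k).symm

/-! ### Consequences of non-degeneracy -/

lemma exists_small (hO : P.O P.one = 0) {ε : ℝ≥0∞} (hε : 0 < ε) :
    ∃ s, 0 < s ∧ P.mul s P.one ≤ ε := by
  have h : (⨅ s ∈ Ioi (0 : ℝ≥0∞), P.mul s P.one) < ε := by
    rw [show (⨅ s ∈ Ioi (0 : ℝ≥0∞), P.mul s P.one) = P.O P.one from rfl, hO]; exact hε
  simp only [iInf_lt_iff, mem_Ioi] at h
  obtain ⟨s, hs, h⟩ := h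
  exact ⟨s, hs, h.le⟩

lemma tendsto_zero (hO : P.O P.one = 0) {t : ℝ≥0∞} (ht : t ≤ P.one) :
    Tendsto (fun s => P.mul s t) (𝓝 0) (𝓝 0) := by
  rw [ENNReal.tendsto_nhds_zero]
  intro ε hε
  obtain ⟨s₀, hs₀, h⟩ := exists_small hO hε
  filter_upwards [Iio_mem_nhds hs₀] with s hs
  calc P.mul s t ≤ P.mul s₀ P.one := P.mono (le_of_lt hs) ht
  _ ≤ ε := h

lemma contR (hO : P.O P.one = 0) {t : ℝ≥0∞} (ht : t ≤ P.one) :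
    Continuous (fun s => P.mul s t) := by
  rw [continuous_iff_continuousAt]
  intro s
  rcases eq_or_ne s 0 with rfl | hs
  · show Tendsto (fun s => P.mul s t) (𝓝 0) (𝓝 (P.mul 0 t))
    rw [P.zero_mul]
    exact tendsto_zero hO ht
  · exact P.contRAt hs

lemma mul_one (hO : P.O P.one = 0) {t : ℝ≥0∞} (ht : t ≤ P.one) : P.mul t P.one = t := by
  have hs := intermediate_value_Icc ((show (0:ℝ≥0∞) ≤ P.one from zero_le)) (contR hO le_rfl).continuousOn
  rw [P.zero_mul, P.one_mul] at hs
  obtain ⟨u, _, hu0⟩ := hs ⟨zero_le, ht⟩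
  have hu : P.mul u P.one = t := hu0
  calc P.mul t P.one = P.mul (P.mul u P.one) P.one := by rw [hu]
  _ = P.mul u (P.mul P.one P.one) := P.assoc _ _ _
  _ = P.mul u P.one := by rw [P.one_mul]
  _ = t := hu

lemma idem_mul_right (hO : P.O P.one = 0) {e x : ℝ≥0∞} (he : e ≤ P.one) (hee : P.mul e e = e)
    (hxe : x ≤ e) : P.mul x e = x := by
  have hc := intermediate_value_Icc ((show (0:ℝ≥0∞) ≤ P.one from zero_le)) (contR hO he).continuousOn
  rw [P.zero_mul, P.one_mul] at hc
  obtain ⟨u, _, hu0⟩ := hc ⟨zero_le, hxe⟩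
  have hu : P.mul u e = x := hu0
  calc P.mul x e = P.mul (P.mul u e) e := by rw [hu]
  _ = P.mul u (P.mul e e) := P.assoc _ _ _
  _ = P.mul u e := by rw [hee]
  _ = x := hu

lemma idem_mul_left (hO : P.O P.one = 0) {e x : ℝ≥0∞} (he : e ≤ P.one) (hee : P.mul e e = e)
    (hxe : x ≤ e) : P.mul e x = x := by
  rcases eq_or_ne e 0 with rfl | he0
  · have hx : x = 0 := le_antisymm hxe (zero_le)
    rw [hx, P.mul_zero]
  rcases eq_or_ne e ⊤ with rfl | heT
  · have hone : P.one = ⊤ := top_le_iff.mp he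
    rw [← hone, P.one_mul]
  · have hc := intermediate_value_Icc ((show (0:ℝ≥0∞) ≤ P.one from zero_le)) (P.contL he0 heT).continuousOn
    rw [P.mul_zero, mul_one hO he] at hc
    obtain ⟨u, _, hu0⟩ := hc ⟨zero_le, hxe⟩
    have hu : P.mul e u = x := hu0
    calc P.mul e x = P.mul e (P.mul e u) := by rw [hu]
    _ = P.mul (P.mul e e) u := (P.assoc _ _ _).symm
    _ = P.mul e u := by rw [hee]
    _ = x := hu

lemma exists_sqrt (hO : P.O P.one = 0) {c : ℝ≥0∞} (hc : c ≤ P.one) :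
    ∃ d, d ≤ P.one ∧ P.mul d d = c := by
  have hcont : ContinuousOn (fun t => P.mul t t) (Icc 0 P.one) := by
    intro t ht
    rcases eq_or_ne t 0 with rfl | ht0
    · have h1 : Tendsto (fun s => P.mul s P.one) (𝓝[Icc 0 P.one] (0 : ℝ≥0∞)) (𝓝 0) :=
        (tendsto_zero hO le_rfl).mono_left nhdsWithin_le_nhds
      have h2 : Tendsto (fun s => P.mul s s) (𝓝[Icc 0 P.one] (0 : ℝ≥0∞)) (𝓝 0) := by
        apply tendsto_of_tendsto_of_tendsto_of_le_of_le' tendsto_const_nhds h1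
        · exact Eventually.of_forall (fun s => zero_le)
        · filter_upwards [self_mem_nhdsWithin] with s hs
          exact P.mono le_rfl hs.2
      show Tendsto (fun t => P.mul t t) (𝓝[Icc 0 P.one] (0 : ℝ≥0∞)) (𝓝 (P.mul 0 0))
      rw [P.zero_mul]
      exact h2
    rcases eq_or_ne t ⊤ with rfl | htT
    · have hone : P.one = ⊤ := top_le_iff.mp ht.2
      have hval : P.mul ⊤ ⊤ = ⊤ := by rw [← hone]; rw [P.one_mul, hone]
      show Tendsto (fun t => P.mul t t) (𝓝[Icc 0 P.one] (⊤ : ℝ≥0∞)) (𝓝 (P.mul ⊤ ⊤))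
      rw [hval]
      apply Tendsto.mono_left _ nhdsWithin_le_nhds
      apply ENNReal.tendsto_nhds_top
      intro n
      have hnT : ((n : ℝ≥0∞) + 1) ≠ ⊤ := by
        simp [ENNReal.add_eq_top]
      have hlim : Tendsto (fun s => P.mul s ((n : ℝ≥0∞) + 1)) (𝓝 ⊤)
          (𝓝 (P.mul ⊤ ((n : ℝ≥0∞) + 1))) := (P.contRAt (by simp)).tendsto
      have hval2 : P.mul ⊤ ((n : ℝ≥0∞) + 1) = (n : ℝ≥0∞) + 1 := by
        rw [← hone, P.one_mul]
      rw [hval2] at hlim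
      have hlt : (n : ℝ≥0∞) < (n : ℝ≥0∞) + 1 :=
        ENNReal.lt_add_right (by simp) one_ne_zero
      have h3 : ∀ᶠ s in 𝓝 (⊤ : ℝ≥0∞), (n : ℝ≥0∞) < P.mul s ((n : ℝ≥0∞) + 1) :=
        hlim.eventually_const_lt hlt
      have h4 : ∀ᶠ s in 𝓝 (⊤ : ℝ≥0∞), ((n : ℝ≥0∞) + 1) ≤ s := by
        filter_upwards [Ioi_mem_nhds (lt_top_iff_ne_top.mpr hnT)] with s hs
        exact le_of_lt hs
      filter_upwards [h3, h4] with s h3 h4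
      exact lt_of_lt_of_le h3 (P.mono le_rfl h4)
    · have hdiag : ContinuousAt (fun t : ℝ≥0∞ => (t, t)) t :=
        (continuous_id.prodMk continuous_id).continuousAt
      have : ContinuousAt (fun t : ℝ≥0∞ => P.mul t t) t :=
        ContinuousAt.comp (f := fun t : ℝ≥0∞ => (t, t)) (P.contAt_joint ht0 htT) hdiag
      exact this.continuousWithinAt
  have hs := intermediate_value_Icc ((show (0:ℝ≥0∞) ≤ P.one from zero_le)) hcont
  rw [P.zero_mul, P.one_mul] at hs
  obtain ⟨d, hd, hdd⟩ := hs ⟨zero_le, hc⟩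
  exact ⟨d, hd.2, hdd⟩


lemma comm_of_le (hO : P.O P.one = 0) {x y : ℝ≥0∞} (hx1 : x ≤ P.one) (hy1 : y ≤ P.one)
    (hxy : x ≤ y) : P.mul x y = P.mul y x := by
  by_cases hE : ∃ e, x ≤ e ∧ e ≤ y ∧ P.mul e e = e
  · obtain ⟨e, hxe, hey, hee⟩ := hE
    have he1 : e ≤ P.one := le_trans hey hy1
    have h1 : P.mul x y = x :=
      le_antisymm
        (by calc P.mul x y ≤ P.mul x P.one := P.mono le_rfl hy1
            _ = x := mul_one hO hx1)
        (by calc x = P.mul x e := (idem_mul_right hO he1 hee hxe).symm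
            _ ≤ P.mul x y := P.mono le_rfl hey)
    have h2 : P.mul y x = x :=
      le_antisymm
        (by calc P.mul y x ≤ P.mul P.one x := P.mono hy1 le_rfl
            _ = x := P.one_mul x)
        (by calc x = P.mul e x := (idem_mul_left hO he1 hee hxe).symm
            _ ≤ P.mul y x := P.mono hey le_rfl)
    rw [h1, h2]
  · push_neg at hE
    have hx0 : 0 < x := by
      rcases eq_or_ne x 0 with rfl | h
      · exact absurd (P.zero_mul 0) (hE 0 le_rfl (zero_le))
      · exact zero_lt_iff.mpr h
    have hylt : y < P.one := by
      rcases lt_or_eq_of_le hy1 with h | h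
      · exact h
      · exact absurd (P.one_mul P.one) (hE P.one hx1 (h ▸ le_rfl))
    have hy0 : 0 < y := lt_of_lt_of_le hx0 hxy
    have hyT : y ≠ ⊤ := (lt_of_lt_of_le hylt le_top).ne
    have hsq : ∀ t : ℝ≥0∞, ∃ d, t ≤ P.one → (d ≤ P.one ∧ P.mul d d = t) := by
      intro t
      by_cases h : t ≤ P.one
      · obtain ⟨dd, hd⟩ := exists_sqrt hO h
        exact ⟨dd, fun _ => hd⟩
      · exact ⟨0, fun h' => absurd h' h⟩
    choose F hF using hsq
    set d : ℕ → ℝ≥0∞ := fun n => F^[n] y with hd_def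
    have hd0 : d 0 = y := rfl
    have hdsucc : ∀ n, d (n + 1) = F (d n) := fun n => Function.iterate_succ_apply' F n y
    have hd1 : ∀ n, d n ≤ P.one := by
      intro n
      induction n with
      | zero => exact hy1
      | succ n ih => rw [hdsucc]; exact (hF (d n) ih).1
    have hroot : ∀ n, P.mul (d (n + 1)) (d (n + 1)) = d n := by
      intro n
      rw [hdsucc]
      exact (hF (d n) (hd1 n)).2
    have hdmono : Monotone d := by
      apply monotone_nat_of_le_succ
      intro n
      calc d n = P.mul (d (n + 1)) (d (n + 1)) := (hroot n).symm
      _ ≤ P.mul (d (n + 1)) P.one := P.mono le_rfl (hd1 (n + 1))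
      _ = d (n + 1) := mul_one hO (hd1 (n + 1))
    have hdne : ∀ n, d n ≠ P.one := by
      intro n
      induction n with
      | zero => exact hylt.ne
      | succ n ih =>
        intro h
        apply ih
        rw [← hroot n, h, P.one_mul]
    have hypow : ∀ n, ∃ M, P.pw (d n) M = y := by
      intro n
      induction n with
      | zero => exact ⟨0, rfl⟩
      | succ n ih =>
        obtain ⟨M, hM⟩ := ih
        exact ⟨2 * M + 1, by rw [pw_sqrt (hroot n), hM]⟩
    have hcomm : ∀ n k, P.mul (P.pw (d n) k) y = P.mul y (P.pw (d n) k) := by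
      intro n k
      obtain ⟨M, hM⟩ := hypow n
      rw [← hM, pw_add, pw_add]
      congr 1
      omega
    have hbelow : ∀ n, ∃ k, P.pw (d n) k < x := by
      intro n
      by_contra h
      push_neg at h
      set L := ⨅ k, P.pw (d n) k with hL
      have hxL : x ≤ L := le_iInf h
      have hLy : L ≤ y := by
        obtain ⟨M, hM⟩ := hypow n
        exact le_trans (iInf_le _ M) hM.le
      have hL0 : L ≠ 0 := (lt_of_lt_of_le hx0 hxL).ne'
      have hLT : L ≠ ⊤ := (lt_of_le_of_lt hLy (lt_top_iff_ne_top.mpr hyT)).ne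
      have htend : Tendsto (P.pw (d n)) atTop (𝓝 L) := tendsto_atTop_iInf (pw_antitone (hd1 n))
      have hnat : Tendsto (fun k : ℕ => 2 * k + 1) atTop atTop :=
        tendsto_atTop_mono (f := id) (fun k => by simp only [id]; omega) tendsto_id
      have htend2 : Tendsto (fun k => P.pw (d n) (2 * k + 1)) atTop (𝓝 L) :=
        htend.comp hnat
      have hdiag : Tendsto (fun k => ((P.pw (d n) k), (P.pw (d n) k))) atTop (𝓝 (L, L)) :=
        htend.prodMk_nhds htend
      have hmul : Tendsto (fun k => P.mul (P.pw (d n) k) (P.pw (d n) k)) atTop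
          (𝓝 (P.mul L L)) := (P.contAt_joint hL0 hLT).tendsto.comp hdiag
      have heqk : ∀ k, P.mul (P.pw (d n) k) (P.pw (d n) k) = P.pw (d n) (2 * k + 1) := by
        intro k
        rw [pw_add]
        congr 1
        omega
      simp only [heqk] at hmul
      exact hE L hxL hLy (tendsto_nhds_unique hmul htend2)
    set A := {p : ℝ≥0∞ | (∃ n k, P.pw (d n) k = p) ∧ x ≤ p} with hA
    set B := {p : ℝ≥0∞ | (∃ n k, P.pw (d n) k = p) ∧ p < x} with hB
    have hyA : y ∈ A := ⟨⟨0, 0, rfl⟩, hxy⟩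
    set u := sInf A with hu_def
    set v := sSup B with hv_def
    have hxu : x ≤ u := le_sInf (fun p hp => hp.2)
    have hvx : v ≤ x := sSup_le (fun p hp => hp.2.le)
    have huy : u ≤ y := sInf_le hyA
    have hkey : ∀ n, P.mul (d n) u ≤ v := by
      intro n
      have hfind := hbelow n
      have hkspec : P.pw (d n) (Nat.find hfind) < x := Nat.find_spec hfind
      have hkne : Nat.find hfind ≠ 0 := by
        intro h
        rw [h, pw_zero] at hkspec
        exact absurd hkspec (not_lt.mpr (le_trans hxy (hdmono (Nat.zero_le n))))
      obtain ⟨k', hk'eq⟩ := Nat.exists_eq_succ_of_ne_zero hkne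
      rw [hk'eq] at hkspec
      have hk' : x ≤ P.pw (d n) k' := by
        have := Nat.find_min hfind (m := k') (by omega)
        exact not_lt.mp this
      have hu_le : u ≤ P.pw (d n) k' := sInf_le ⟨⟨n, k', rfl⟩, hk'⟩
      calc P.mul (d n) u ≤ P.mul (d n) (P.pw (d n) k') := P.mono le_rfl hu_le
      _ = P.pw (d n) (k' + 1) := (pw_succ _ _).symm
      _ ≤ v := le_sSup ⟨⟨n, k' + 1, rfl⟩, hkspec⟩
    set β := ⨆ n, d n with hβdef
    have hβ1 : β ≤ P.one := iSup_le hd1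
    have hβ0 : β ≠ 0 := (lt_of_lt_of_le hy0 (le_iSup d 0)).ne'
    have hdβ : Tendsto d atTop (𝓝 β) := tendsto_atTop_iSup hdmono
    have hβidem : P.mul β β = β := by
      rcases eq_or_ne β ⊤ with h | h
      · have hone : P.one = ⊤ := top_le_iff.mp (h ▸ hβ1)
        rw [h, ← hone, P.one_mul, hone]
      · have h1 : Tendsto (fun n => d (n + 1)) atTop (𝓝 β) :=
          hdβ.comp (tendsto_add_atTop_nat 1)
        have hdiag : Tendsto (fun n => (d (n + 1), d (n + 1))) atTop (𝓝 (β, β)) :=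
          h1.prodMk_nhds h1
        have h2 : Tendsto (fun n => P.mul (d (n + 1)) (d (n + 1))) atTop (𝓝 (P.mul β β)) :=
          (P.contAt_joint hβ0 h).tendsto.comp hdiag
        simp only [hroot] at h2
        exact tendsto_nhds_unique h2 hdβ
    have hmβu : P.mul β u = u :=
      idem_mul_left hO hβ1 hβidem (le_trans huy (le_iSup d 0))
    have huv : u ≤ v := by
      have ht : Tendsto (fun n => P.mul (d n) u) atTop (𝓝 (P.mul β u)) :=
        (P.contRAt hβ0).tendsto.comp hdβ
      rw [hmβu] at ht
      exact le_of_tendsto ht (Eventually.of_forall hkey)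
    have hux : u = x := le_antisymm (le_trans huv hvx) hxu
    obtain ⟨p, -, hptend, hpA⟩ := exists_seq_tendsto_sInf ⟨y, hyA⟩ (OrderBot.bddBelow A)
    rw [← hu_def, hux] at hptend
    have h1 : Tendsto (fun i => P.mul (p i) y) atTop (𝓝 (P.mul x y)) :=
      (P.contRAt hx0.ne').tendsto.comp hptend
    have h2 : Tendsto (fun i => P.mul y (p i)) atTop (𝓝 (P.mul y x)) :=
      (P.contL hy0.ne' hyT).continuousAt.tendsto.comp hptend
    have heq : (fun i => P.mul (p i) y) = (fun i => P.mul y (p i)) := by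
      funext i
      obtain ⟨⟨n, k, hk⟩, -⟩ := hpA i
      rw [← hk]
      exact hcomm n k
    rw [heq] at h1
    exact tendsto_nhds_unique h1 h2


end PseudoMul


theorem nondegenerate_iff_commutative (P : PseudoMul) :
    P.O P.one = 0 ↔
    ∀ s ∈ Icc 0 P.one, ∀ t ∈ Icc 0 P.one, P.mul s t = P.mul t s := by
  constructor
  · intro hO s hs t ht
    rcases le_total s t with h | h
    · exact PseudoMul.comm_of_le hO hs.2 ht.2 h
    · exact (PseudoMul.comm_of_le hO ht.2 hs.2 h).symm
  · intro hcomm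
    have hle : ∀ ε : ℝ≥0∞, 0 < ε → P.O P.one ≤ ε := by
      intro ε hε
      have hs0 : 0 < min ε P.one := lt_min hε P.one_pos
      have hs1 : min ε P.one ≤ P.one := min_le_right _ _
      have hval : P.mul (min ε P.one) P.one = min ε P.one := by
        rw [hcomm (min ε P.one) ⟨zero_le, hs1⟩ P.one ⟨zero_le, le_rfl⟩, P.one_mul]
      calc P.O P.one ≤ P.mul (min ε P.one) P.one := iInf₂_le (min ε P.one) hs0
      _ = min ε P.one := hval
      _ ≤ ε := min_le_left _ _
    exact le_antisymm (le_of_forall_gt_imp_ge_of_dense (fun a ha => hle a ha)) (zero_le)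
end

section
/- Let ⊙ be a pseudo-multiplication and φ the supremum of the set of ⊙-finite elements. Then there are no elements t < φ and t' > φ with t ⊙ t' = φ. -/
open Set Filter Topology
open scoped ENNReal

private lemma PseudoMul.O_le (P : PseudoMul) (t : ℝ≥0∞) {s : ℝ≥0∞} (hs : 0 < s) :
    P.O t ≤ P.mul s t := by
  unfold PseudoMul.O
  exact iInf₂_le s hs

private lemma PseudoMul.le_O (P : PseudoMul) {t c : ℝ≥0∞}
    (h : ∀ s, 0 < s → c ≤ P.mul s t) : c ≤ P.O t := by
  unfold PseudoMul.O
  exact le_iInf₂ fun s hs => h s hs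

/-- If `f` is continuous within `T` at `x₀`, `S ⊆ T`, `x₀ ∈ closure S` and `f ≤ c` on `S`,
then `f x₀ ≤ c`. -/
private lemma aux_le {f : ℝ≥0∞ → ℝ≥0∞} {T S : Set ℝ≥0∞} {x₀ c : ℝ≥0∞}
    (hST : S ⊆ T) (hx₀ : x₀ ∈ closure S) (hf : ContinuousWithinAt f T x₀)
    (hb : ∀ x ∈ S, f x ≤ c) : f x₀ ≤ c := by
  by_contra h
  push_neg at h
  have h1 : ∀ᶠ x in 𝓝[T] x₀, c < f x := hf.eventually (lt_mem_nhds h)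
  have h3 : (𝓝[S] x₀).NeBot := mem_closure_iff_nhdsWithin_neBot.mp hx₀
  have h4 : ∀ᶠ x in 𝓝[S] x₀, c < f x := h1.filter_mono (nhdsWithin_mono _ hST)
  obtain ⟨x, hx1, hx2⟩ := (h4.and self_mem_nhdsWithin).exists
  exact absurd (hb x hx2) (not_le.mpr hx1)

private lemma aux_ge {f : ℝ≥0∞ → ℝ≥0∞} {T S : Set ℝ≥0∞} {x₀ c : ℝ≥0∞}
    (hST : S ⊆ T) (hx₀ : x₀ ∈ closure S) (hf : ContinuousWithinAt f T x₀)
    (hb : ∀ x ∈ S, c ≤ f x) : c ≤ f x₀ := by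
  by_contra h
  push_neg at h
  have h1 : ∀ᶠ x in 𝓝[T] x₀, f x < c := hf.eventually (gt_mem_nhds h)
  have h3 : (𝓝[S] x₀).NeBot := mem_closure_iff_nhdsWithin_neBot.mp hx₀
  have h4 : ∀ᶠ x in 𝓝[S] x₀, f x < c := h1.filter_mono (nhdsWithin_mono _ hST)
  obtain ⟨x, hx1, hx2⟩ := (h4.and self_mem_nhdsWithin).exists
  exact absurd (hb x hx2) (not_le.mpr hx1)

/-- For fixed finite positive `a`, `b ↦ a ⊙ b` is continuous (on all of `[0,∞]`). -/
private lemma cont_left (P : PseudoMul) {a : ℝ≥0∞} (ha : 0 < a) (hat : a ≠ ⊤) :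
    Continuous (fun b => P.mul a b) := by
  rw [← continuousOn_univ]
  have hg : ContinuousOn (fun b : ℝ≥0∞ => ((a, b) : ℝ≥0∞ × ℝ≥0∞)) univ :=
    (continuous_const.prodMk continuous_id).continuousOn
  have h := P.continuousOn.comp hg
    (fun b _ => Set.mk_mem_prod ⟨ha, lt_top_iff_ne_top.mpr hat⟩ (Set.mem_univ b))
  exact h

theorem no_decomposition (P : PseudoMul) (φ : ℝ≥0∞)
    (hφ : φ = sSup {t : ℝ≥0∞ | P.O t = 0}) :
    ¬ ∃ t t' : ℝ≥0∞, t < φ ∧ φ < t' ∧ P.mul t t' = φ := by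
  rintro ⟨t, t', ht, ht', hmul⟩
  -- basic positivity facts
  have one_pos : 0 < P.one := by
    rcases eq_or_ne P.one 0 with h | h
    · have h1 : (0 : ℝ≥0∞) = 1 := by
        rw [← P.zero_mul 1, ← h]; exact P.one_mul 1
      simp at h1
    · exact pos_iff_ne_zero.mpr h
  have mulpos : ∀ {a b : ℝ≥0∞}, 0 < a → 0 < b → 0 < P.mul a b := by
    intro a b ha hb
    rcases eq_or_ne (P.mul a b) 0 with h | h
    · rcases P.eq_zero_of_mul a b h with rfl | rfl
      · exact absurd ha (lt_irrefl 0)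
      · exact absurd hb (lt_irrefl 0)
    · exact pos_iff_ne_zero.mpr h
  have t_pos : 0 < t := by
    rcases eq_or_ne t 0 with rfl | h
    · rw [P.zero_mul] at hmul
      rw [← hmul] at ht
      exact absurd ht (lt_irrefl 0)
    · exact pos_iff_ne_zero.mpr h
  have φpos : 0 < φ := lt_of_le_of_lt (zero_le : 0 ≤ t) ht
  have φ_ne_top : φ ≠ ⊤ := ne_top_of_lt ht'
  have t_ne_top : t ≠ ⊤ := ne_top_of_lt ht
  -- O-facts
  have hOfin : ∀ {y : ℝ≥0∞}, y < φ → P.O y = 0 := by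
    intro y hy
    rw [hφ] at hy
    obtain ⟨u, hu, hyu⟩ := lt_sSup_iff.mp hy
    have h1 : P.O y ≤ P.O u :=
      P.le_O fun s hs => (P.O_le y hs).trans (P.mono le_rfl hyu.le)
    have hu' : P.O u = 0 := hu
    exact le_antisymm (hu' ▸ h1) zero_le
  have hOle : ∀ {y : ℝ≥0∞}, P.O y = 0 → y ≤ φ := by
    intro y h
    rw [hφ]
    exact le_sSup h
  have hOt' : P.O t' ≠ 0 := fun h => absurd (hOle h) (not_le.mpr ht')
  -- flatness at small first arguments
  have hflat0 : ∀ x, 0 < x → x ≤ t → P.mul x t' = φ := by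
    intro x hx hxt
    have hle : P.mul x t' ≤ φ := by
      rw [← hmul]; exact P.mono hxt le_rfl
    have hge : φ ≤ P.mul x t' := by
      by_contra h
      push_neg at h
      have h0 : P.O (P.mul x t') = 0 := hOfin h
      have h1 : P.O t' ≤ P.O (P.mul x t') := by
        apply P.le_O
        intro s hs
        have h2 := P.O_le t' (mulpos hs hx)
        rwa [P.assoc] at h2
      rw [h0] at h1
      exact hOt' (le_antisymm h1 zero_le)
    exact le_antisymm hle hge
  -- small multiples of φ
  have h8 : ∀ r, 0 < r → r ≤ P.one → P.mul r φ = φ := by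
    intro r hr hrone
    have h1 : P.mul r t ≤ t := by
      calc P.mul r t ≤ P.mul P.one t := P.mono hrone le_rfl
      _ = t := P.one_mul t
    calc P.mul r φ = P.mul r (P.mul t t') := by rw [hmul]
    _ = P.mul (P.mul r t) t' := (P.assoc r t t').symm
    _ = φ := hflat0 _ (mulpos hr t_pos) h1
  -- O φ = φ
  have hOphi : P.O φ = φ := by
    have hle : P.O φ ≤ φ := by
      have := P.O_le φ one_pos
      rwa [P.one_mul] at this
    have hge : φ ≤ P.O φ := by
      apply P.le_O
      intro s hs
      calc φ = P.mul (min s P.one) φ := (h8 _ (lt_min hs one_pos) (min_le_right _ _)).symm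
      _ ≤ P.mul s φ := P.mono (min_le_left _ _) le_rfl
    exact le_antisymm hle hge
  -- global collapse: a ⊙ φ = φ for all a > 0
  have hcol : ∀ a, 0 < a → P.mul a φ = φ := by
    have hge : ∀ a, 0 < a → φ ≤ P.mul a φ := by
      intro a ha
      have := P.O_le φ ha
      rwa [hOphi] at this
    have hfin : ∀ a, 0 < a → a ≠ ⊤ → P.mul a φ ≤ φ := by
      intro a ha hat
      by_contra hgt
      push_neg at hgt
      have step1 : ∀ b ∈ Ioc (0:ℝ≥0∞) t, t ≤ P.mul a b := by
        rintro b ⟨hb0, hbt⟩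
        by_contra hle
        push_neg at hle
        have h1 : P.mul (P.mul a b) t' = φ := hflat0 _ (mulpos ha hb0) hle.le
        rw [P.assoc, hflat0 b hb0 hbt] at h1
        exact absurd h1 (ne_of_gt hgt)
      have h2 : t ≤ P.mul a 0 := by
        apply aux_ge (T := univ) (S := Ioc 0 t) (subset_univ _)
          _ ((cont_left P ha hat).continuousWithinAt) step1
        rw [closure_Ioc t_pos.ne]
        exact ⟨le_rfl, t_pos.le⟩
      rw [P.mul_zero] at h2
      exact absurd h2 (not_le.mpr t_pos)
    have htop : P.mul ⊤ φ ≤ φ := by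
      apply aux_le (T := Ioi 0) (S := Ioo 0 ⊤) (f := fun x => P.mul x φ)
        (fun x hx => hx.1) _
        ((P.continuousOn_left φ).continuousWithinAt (by simp))
        (fun x hx => le_of_eq (le_antisymm (hfin x hx.1 hx.2.ne) (hge x hx.1)))
      rw [closure_Ioo (by simp : (0:ℝ≥0∞) ≠ ⊤)]
      exact ⟨zero_le, le_rfl⟩
    intro a ha
    rcases eq_or_ne a ⊤ with rfl | h
    · exact le_antisymm htop (hge _ ha)
    · exact le_antisymm (hfin a ha h) (hge a ha)
  -- case split on one vs φ
  by_cases hcase : φ ≤ P.one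
  · -- KILL 1 : φ ≤ one
    have hk : ∀ r, 0 < r → P.mul φ t ≤ P.mul r t := by
      intro r hr
      have h1 : φ ≤ P.mul r P.one := by
        calc φ = P.mul r φ := (hcol r hr).symm
        _ ≤ P.mul r P.one := P.mono le_rfl hcase
      calc P.mul φ t ≤ P.mul (P.mul r P.one) t := P.mono h1 le_rfl
      _ = P.mul r (P.mul P.one t) := P.assoc _ _ _
      _ = P.mul r t := by rw [P.one_mul]
    have h1 : P.mul φ t ≤ P.O t := P.le_O fun s hs => hk s hs
    rw [hOfin ht] at h1
    have h2 : P.mul φ t = 0 := le_antisymm h1 zero_le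
    rcases P.eq_zero_of_mul _ _ h2 with h3 | h3
    · exact absurd h3 φpos.ne'
    · exact absurd h3 t_pos.ne'
  · -- case one < φ
    have hone_lt : P.one < φ := not_le.mp hcase
    -- the threshold Z
    set D : Set ℝ≥0∞ := {z | P.mul t z ≤ φ} with hD
    set Z : ℝ≥0∞ := sSup D with hZ
    have hDmem : t' ∈ D := le_of_eq hmul
    have hDclosed : IsClosed D := by
      have hc : Continuous (fun z => P.mul t z) := cont_left P t_pos t_ne_top
      exact isClosed_Iic.preimage hc
    have hZt' : t' ≤ Z := le_sSup hDmem
    have hZD : Z ∈ D :=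
      hDclosed.closure_subset ((isLUB_sSup D).mem_closure ⟨t', hDmem⟩)
    have hZflat : P.mul t Z = φ := by
      refine le_antisymm hZD ?_
      rw [← hmul]
      exact P.mono le_rfl hZt'
    have hZmax : ∀ z, Z < z → φ < P.mul t z := by
      intro z hz
      by_contra h
      push_neg at h
      exact absurd (le_sSup (show z ∈ D from h)) (not_le.mpr hz)
    have hφZ : φ ≤ Z := le_trans ht'.le hZt'
    -- the set A and its sup sb
    set A : Set ℝ≥0∞ := {x | 0 < x ∧ P.mul x Z = φ} with hA
    set sb : ℝ≥0∞ := sSup A with hsb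
    have htA : t ∈ A := ⟨t_pos, hZflat⟩
    have hsb_pos : 0 < sb := lt_of_lt_of_le t_pos (le_sSup htA)
    have hAone : ∀ x ∈ A, x < P.one := by
      rintro x ⟨hx0, hxZ⟩
      by_contra h
      push_neg at h
      have h1 : Z ≤ P.mul x Z := by
        calc Z = P.mul P.one Z := (P.one_mul Z).symm
        _ ≤ P.mul x Z := P.mono h le_rfl
      rw [hxZ] at h1
      exact absurd (lt_of_lt_of_le ht' (le_trans hZt' h1)) (lt_irrefl φ)
    have hsbA : sb ∈ A := by
      constructor
      · exact hsb_pos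
      · have hle : P.mul sb Z ≤ φ := by
          apply aux_le (T := Ioi 0) (S := A) (f := fun x => P.mul x Z)
            (fun x hx => hx.1)
            ((isLUB_sSup A).mem_closure ⟨t, htA⟩)
            ((P.continuousOn_left Z).continuousWithinAt hsb_pos)
            (fun x hx => le_of_eq hx.2)
        have hge : φ ≤ P.mul sb Z := by
          calc φ = P.mul sb φ := (hcol sb hsb_pos).symm
          _ ≤ P.mul sb Z := P.mono le_rfl hφZ
        exact le_antisymm hle hge
    have hsb_lt_one : sb < P.one := hAone sb hsbA
    have hsb_ne_top : sb ≠ ⊤ := ne_top_of_lt hsb_lt_one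
    have hA_iff : ∀ x, 0 < x → x ≤ sb → P.mul x Z = φ := by
      intro x hx0 hxsb
      have hle : P.mul x Z ≤ φ := by
        rw [← hsbA.2]
        exact P.mono hxsb le_rfl
      have hge : φ ≤ P.mul x Z := by
        calc φ = P.mul x φ := (hcol x hx0).symm
        _ ≤ P.mul x Z := P.mono le_rfl hφZ
      exact le_antisymm hle hge
    have hsbflat : ∀ v, φ ≤ v → v ≤ Z → P.mul sb v = φ := by
      intro v h1 h2
      have hle : P.mul sb v ≤ φ := by
        rw [← hsbA.2]
        exact P.mono le_rfl h2
      have hge : φ ≤ P.mul sb v := by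
        calc φ = P.mul sb φ := (hcol sb hsb_pos).symm
        _ ≤ P.mul sb v := P.mono le_rfl h1
      exact le_antisymm hle hge
    -- the set E and its sup e
    set E : Set ℝ≥0∞ := {y | 0 < y ∧ y < φ ∧ P.mul y Z ≤ Z} with hE
    set e : ℝ≥0∞ := sSup E with he
    have honeE : P.one ∈ E := ⟨one_pos, hone_lt, by rw [P.one_mul]⟩
    have he_ge : P.one ≤ e := le_sSup honeE
    have epos : 0 < e := lt_of_lt_of_le one_pos he_ge
    by_cases hcase2 : φ ≤ e
    · -- SUBCASE e ≥ φ : final blow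
      have hsbφ : sb < φ := lt_trans hsb_lt_one hone_lt
      have hblow : ∀ y ∈ Ioo sb φ, P.mul sb y ≤ sb := by
        rintro y ⟨hy1, hy2⟩
        have hy0 : 0 < y := lt_of_le_of_lt (zero_le : 0 ≤ sb) hy1
        have hyZ_le : P.mul y Z ≤ Z := by
          obtain ⟨y', hy'E, hyy'⟩ := lt_sSup_iff.mp (lt_of_lt_of_le hy2 hcase2)
          exact le_trans (P.mono hyy'.le le_rfl) hy'E.2.2
        have hyZ_ge : φ ≤ P.mul y Z := by
          calc φ = P.mul y φ := (hcol y hy0).symm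
          _ ≤ P.mul y Z := P.mono le_rfl hφZ
        have h1 : P.mul sb (P.mul y Z) = φ := hsbflat _ hyZ_ge hyZ_le
        have h2 : P.mul (P.mul sb y) Z = φ := by rw [P.assoc]; exact h1
        exact le_sSup (show P.mul sb y ∈ A from ⟨mulpos hsb_pos hy0, h2⟩)
      have hfinal : P.mul sb φ ≤ sb := by
        apply aux_le (T := univ) (S := Ioo sb φ) (f := fun y => P.mul sb y)
          (subset_univ _) _
          ((cont_left P hsb_pos hsb_ne_top).continuousWithinAt) hblow
        rw [closure_Ioo hsbφ.ne]
        exact ⟨hsbφ.le, le_rfl⟩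
      rw [hcol sb hsb_pos] at hfinal
      exact absurd hfinal (not_le.mpr hsbφ)
    · -- SUBCASE e < φ
      have he3 : e < φ := not_le.mp hcase2
      have heE : e ∈ E := by
        refine ⟨epos, he3, ?_⟩
        apply aux_le (T := Ioi 0) (S := E) (f := fun y => P.mul y Z)
          (fun y hy => hy.1)
          ((isLUB_sSup E).mem_closure ⟨P.one, honeE⟩)
          ((P.continuousOn_left Z).continuousWithinAt epos)
          (fun y hy => hy.2.2)
      have heZ : P.mul e Z = Z := by
        refine le_antisymm heE.2.2 ?_
        calc Z = P.mul P.one Z := (P.one_mul Z).symm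
        _ ≤ P.mul e Z := P.mono he_ge le_rfl
      -- O (e ⊙ e) = 0
      have hOe : P.O e = 0 := hOfin he3
      have hOee : P.O (P.mul e e) = 0 := by
        by_contra hne
        have hδ : 0 < P.O (P.mul e e) := pos_iff_ne_zero.mpr hne
        obtain ⟨ρ, hρ0, hρ⟩ : ∃ ρ, 0 < ρ ∧ P.mul ρ e < P.O (P.mul e e) := by
          by_contra hcon
          push_neg at hcon
          have : P.O (P.mul e e) ≤ P.O e := P.le_O fun s hs => hcon s hs
          rw [hOe] at this
          exact hδ.ne' (le_antisymm this zero_le)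
        obtain ⟨r, hr0, hr⟩ : ∃ r, 0 < r ∧ P.mul r e < ρ := by
          by_contra hcon
          push_neg at hcon
          have : ρ ≤ P.O e := P.le_O fun s hs => hcon s hs
          rw [hOe] at this
          exact hρ0.ne' (le_antisymm this zero_le)
        have h1 : P.O (P.mul e e) ≤ P.mul (P.mul r e) e := by
          have := P.O_le (P.mul e e) hr0
          rwa [← P.assoc] at this
        have h2 : P.mul (P.mul r e) e ≤ P.mul ρ e := P.mono hr.le le_rfl
        exact absurd (lt_of_le_of_lt (h1.trans h2) hρ) (lt_irrefl _)
      have hee_lt : P.mul e e < φ := by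
        have h1 : P.mul e e ≤ φ := by
          calc P.mul e e ≤ P.mul e φ := P.mono le_rfl he3.le
          _ = φ := hcol e epos
        rcases lt_or_eq_of_le h1 with h | h
        · exact h
        · rw [h] at hOee
          rw [hOee] at hOphi
          exact absurd hOphi.symm φpos.ne'
      have heidem : P.mul e e = e := by
        have hle : P.mul e e ≤ e := by
          apply le_sSup
          refine ⟨mulpos epos epos, hee_lt, ?_⟩
          rw [P.assoc, heZ, heZ]
        have hge : e ≤ P.mul e e := by
          calc e = P.mul P.one e := (P.one_mul e).symm
          _ ≤ P.mul e e := P.mono he_ge le_rfl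
        exact le_antisymm hle hge
      -- e is a right identity on (0, e]
      have hrightid : ∀ v, 0 < v → v ≤ e → P.mul v e = v := by
        intro v hv0 hve
        obtain ⟨r₀, hr₀0, hr₀⟩ : ∃ r₀, 0 < r₀ ∧ P.mul r₀ e < v := by
          by_contra hcon
          push_neg at hcon
          have : v ≤ P.O e := P.le_O fun s hs => hcon s hs
          rw [hOe] at this
          exact hv0.ne' (le_antisymm this zero_le)
        have hr₀e : r₀ ≤ e := by
          by_contra h
          push_neg at h
          have : e ≤ P.mul r₀ e := by
            calc e = P.mul e e := heidem.symm
            _ ≤ P.mul r₀ e := P.mono h.le le_rfl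
          exact absurd (lt_of_le_of_lt (hve.trans this) hr₀) (lt_irrefl _)
        have hsub : Icc r₀ e ⊆ Ioi (0:ℝ≥0∞) := fun x hx => lt_of_lt_of_le hr₀0 hx.1
        have hcont : ContinuousOn (fun r => P.mul r e) (Icc r₀ e) :=
          (P.continuousOn_left e).mono hsub
        have hivt := intermediate_value_Icc hr₀e hcont
        have hv_mem : v ∈ Icc (P.mul r₀ e) (P.mul e e) := by
          constructor
          · exact hr₀.le
          · rw [heidem]; exact hve
        obtain ⟨r, _, hre⟩ := hivt hv_mem
        have hre' : P.mul r e = v := hre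
        calc P.mul v e = P.mul (P.mul r e) e := by rw [hre']
        _ = P.mul r (P.mul e e) := P.assoc _ _ _
        _ = P.mul r e := by rw [heidem]
        _ = v := hre'
      have hte : P.mul t e = t :=
        hrightid t t_pos (le_trans (le_sSup htA) (le_trans hsb_lt_one.le he_ge))
      -- elements above e push products above sb
      have hstep : ∀ w, e < w → w < φ → sb < P.mul t w := by
        intro w hw1 hw2
        have hw0 : 0 < w := lt_trans epos hw1
        have hZw : Z < P.mul w Z := by
          by_contra h
          push_neg at h
          exact absurd (le_sSup (show w ∈ E from ⟨hw0, hw2, h⟩)) (not_le.mpr hw1)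
        have h1 : φ < P.mul t (P.mul w Z) := hZmax _ hZw
        by_contra hcon
        push_neg at hcon
        have h2 : P.mul (P.mul t w) Z = φ := hA_iff _ (mulpos t_pos hw0) hcon
        rw [P.assoc] at h2
        exact absurd h2 (ne_of_gt h1)
      -- sb = t
      have hsb_le_t : sb ≤ P.mul t e := by
        apply aux_ge (T := univ) (S := Ioo e φ) (f := fun w => P.mul t w)
          (subset_univ _) _
          ((cont_left P t_pos t_ne_top).continuousWithinAt)
          (fun w hw => (hstep w hw.1 hw.2).le)
        rw [closure_Ioo he3.ne]
        exact ⟨le_rfl, he3.le⟩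
      rw [hte] at hsb_le_t
      have hsbt : sb = t := le_antisymm hsb_le_t (le_sSup htA)
      -- final dichotomy on φ ⊙ t
      have hget : t ≤ P.mul φ t := by
        calc t = P.mul P.one t := (P.one_mul t).symm
        _ ≤ P.mul φ t := P.mono hone_lt.le le_rfl
      rcases eq_or_lt_of_le hget with heq | hlt
      · -- φ ⊙ t = t : then r ⊙ t = t for all r, contradicting O t = 0
        have hrall : ∀ r, 0 < r → P.mul r t = t := by
          intro r hr
          calc P.mul r t = P.mul r (P.mul φ t) := by rw [← heq]
          _ = P.mul (P.mul r φ) t := (P.assoc _ _ _).symm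
          _ = P.mul φ t := by rw [hcol r hr]
          _ = t := heq.symm
        have h1 : t ≤ P.O t := P.le_O fun s hs => (hrall s hs).ge
        rw [hOfin ht] at h1
        exact absurd (le_antisymm h1 zero_le) t_pos.ne'
      · -- t < φ ⊙ t : but φ ⊙ t ∈ A, so φ ⊙ t ≤ sb = t
        have hmem : P.mul φ t ∈ A := by
          refine ⟨mulpos φpos t_pos, ?_⟩
          rw [P.assoc, hZflat]
          exact hcol φ φpos
        have h1 : P.mul φ t ≤ sb := le_sSup hmem
        rw [hsbt] at h1
        exact absurd h1 (not_le.mpr hlt)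
end
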